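/- arXiv:1208.0017 — 2 statements merged into one kernel-verified Lean document; each statement's English description precedes it below -/
import Mathlib

section
/- Let N ≥ m > 1, m' = m/(m−1), and let f : ℝ → ℝ be continuous. Let u be a solution of the IVP with initial value α > 0 on [0,R), let θ ∈ (0,1), and let r_θ ∈ (0,R) satisfy u(r_θ) = θα and θα ≤ u(r) ≤ α for all r ∈ [0, r_θ]. Set M = max{ f(s) : s ∈ [θα, α] } and assume M > 0. Then r_θ^m ≥ ((1−θ)·m')^(m−1)·N·α^(m−1)/M. -/
open Set Filter MeasureTheory

noncomputable def phim (m x : ℝ) : ℝ := |x| ^ (m - 2) * x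

noncomputable def Fint (f : ℝ → ℝ) (s : ℝ) : ℝ := ∫ t in (0:ℝ)..s, f t

noncomputable def Qfun (N m : ℝ) (f : ℝ → ℝ) (s : ℝ) : ℝ :=
  m * N * Fint f s - (N - m) * s * f s

/-- `u` (with derivative function `u'`) is a solution of the radial quasilinear
equation on the set `J`. -/
def IsSolutionOn (N m : ℝ) (f : ℝ → ℝ) (J : Set ℝ) (u u' : ℝ → ℝ) : Prop :=
  (∀ r ∈ J, HasDerivWithinAt u (u' r) J r) ∧ ContinuousOn u' J ∧
    ∃ w' : ℝ → ℝ,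
      (∀ r ∈ J ∩ Set.Ioi (0:ℝ),
        HasDerivWithinAt (fun t => phim m (u' t)) (w' r) (J ∩ Set.Ioi (0:ℝ)) r) ∧
      ContinuousOn w' (J ∩ Set.Ioi (0:ℝ)) ∧
      ∀ r ∈ J ∩ Set.Ioi (0:ℝ), w' r + ((N - 1) / r) * phim m (u' r) + f (u r) = 0

def IsIVPSolutionOn (N m : ℝ) (f : ℝ → ℝ) (α : ℝ) (J : Set ℝ) (u u' : ℝ → ℝ) : Prop :=
  IsSolutionOn N m f J u u' ∧ u 0 = α ∧ u' 0 = 0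

/-- Admissible domains for the IVP: `[0,∞)` or `[0,R)` with `0 < R`. -/
def IVPDomain (J : Set ℝ) : Prop :=
  J = Set.Ici (0:ℝ) ∨ ∃ R : ℝ, 0 < R ∧ J = Set.Ico (0:ℝ) R

/-- The solution `u` of the IVP on `J` cannot be extended to a solution on a
strictly larger admissible domain. -/
def Noncontinuable (N m : ℝ) (f : ℝ → ℝ) (α : ℝ) (J : Set ℝ) (u u' : ℝ → ℝ) : Prop :=
  ∀ J' : Set ℝ, IVPDomain J' → J ⊂ J' →
    ¬ ∃ v v' : ℝ → ℝ, IsIVPSolutionOn N m f α J' v v' ∧ Set.EqOn v u J ∧ Set.EqOn v' u' J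

open Classical in
/-- The filter describing the approach to the right endpoint of an IVP domain. -/
noncomputable def domEnd (J : Set ℝ) : Filter ℝ :=
  if J = Set.Ici (0:ℝ) then Filter.atTop else nhdsWithin (sSup J) (Set.Iio (sSup J))

def LocLipschitzOn (f : ℝ → ℝ) (S : Set ℝ) : Prop :=
  ∀ x ∈ S, ∃ ε : ℝ, 0 < ε ∧ ∃ K : NNReal, LipschitzOnWith K f (Metric.ball x ε ∩ S)

/-- Assumption (f₂). -/
structure Hf2 (f : ℝ → ℝ) (βm βp : ℝ) (γm γp : EReal) : Prop where
  hβm : βm < 0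
  hβp : 0 < βp
  hFneg : ∀ s : ℝ, s ∈ Set.Ioo βm βp → s ≠ 0 → Fint f s < 0
  hFβm : Fint f βm = 0
  hFβp : Fint f βp = 0
  hγp : (βp : EReal) < γp
  hγm : γm < (βm : EReal)
  hfpos : ∀ s : ℝ, βp < s → (s : EReal) < γp → 0 < f s
  hfneg : ∀ s : ℝ, γm < (s : EReal) → s < βm → f s < 0
  hγpzero : ∀ s : ℝ, (s : EReal) = γp → f s = 0
  hγmzero : ∀ s : ℝ, (s : EReal) = γm → f s = 0
  hlim : ∃ L : EReal,
    Filter.Tendsto (fun s : ℝ => (Fint f s : EReal))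
      (Filter.comap Real.toEReal (nhdsWithin γp (Set.Iio γp))) (nhds L) ∧
    Filter.Tendsto (fun s : ℝ => (Fint f s : EReal))
      (Filter.comap Real.toEReal (nhdsWithin γm (Set.Ioi γm))) (nhds L)
  hlip : LocLipschitzOn f {s : ℝ | (γm < (s : EReal) ∧ s < 0) ∨ (0 < s ∧ (s : EReal) < γp)}

/-- Assumption (f₃). -/
def Hf3 (N m : ℝ) (f : ℝ → ℝ) (βm βp : ℝ) (γm γp : EReal) : Prop :=
  (γp = ⊤ →
    (∃ βb : ℝ, βp < βb ∧ ∀ s : ℝ, βb ≤ s → 0 ≤ Qfun N m f s) ∧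
    (∃ θ : ℝ, θ ∈ Set.Ioo (0:ℝ) 1 ∧
      Filter.Tendsto (fun s : ℝ =>
        sInf ((fun p : ℝ × ℝ =>
          Qfun N m f p.2 * ((|s| ^ (m - 2) * s) / f p.1) ^ (N / m)) ''
            (Set.Icc (θ * s) s ×ˢ Set.Icc (θ * s) s)))
        Filter.atTop Filter.atTop)) ∧
  (γm = ⊥ →
    (∃ βb : ℝ, -βb < βm ∧ ∀ s : ℝ, s ≤ -βb → 0 ≤ Qfun N m f s) ∧
    (∃ θ : ℝ, θ ∈ Set.Ioo (0:ℝ) 1 ∧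
      Filter.Tendsto (fun s : ℝ =>
        sInf ((fun p : ℝ × ℝ =>
          Qfun N m f p.2 * ((|s| ^ (m - 2) * s) / f p.1) ^ (N / m)) ''
            (Set.Icc s (θ * s) ×ˢ Set.Icc s (θ * s))))
        Filter.atBot Filter.atTop))

/-- Assumption (f₄). -/
def Hf4 (N m : ℝ) (f : ℝ → ℝ) (βm βp : ℝ) (γm γp : EReal) : Prop :=
  (γp ≠ ⊤ → ∃ L₀ : ℝ, 0 < L₀ ∧ ∃ βb : ℝ, βp < βb ∧
    ∀ s : ℝ, βb ≤ s → (s : EReal) < γp → f s ≤ L₀ * (γp.toReal - s) ^ (m - 1)) ∧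
  (γm ≠ ⊥ → ∃ L₀ : ℝ, 0 < L₀ ∧ ∃ βb : ℝ, -βm < βb ∧
    ∀ s : ℝ, γm < (s : EReal) → s ≤ -βb → -f s ≤ L₀ * (s - γm.toReal) ^ (m - 1))

lemma phim_zero (m : ℝ) : phim m 0 = 0 := by simp [phim]

lemma abs_phim (m : ℝ) (hm : 1 < m) (x : ℝ) : |phim m x| = |x| ^ (m - 1) := by
  rcases eq_or_ne x 0 with rfl | hx
  · simp [phim, Real.zero_rpow (show m - 1 ≠ 0 by intro h; linarith)]
  · have h0 : (0:ℝ) < |x| := abs_pos.2 hx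
    rw [phim, abs_mul, abs_of_nonneg (Real.rpow_nonneg (abs_nonneg x) _)]
    rw [show m - 1 = (m - 2) + 1 by ring, Real.rpow_add_one h0.ne']

lemma phim_continuous (m : ℝ) (hm : 1 < m) : Continuous (phim m) := by
  rw [continuous_iff_continuousAt]
  intro x
  rcases eq_or_ne x 0 with rfl | hx
  · have hc : ContinuousAt (fun t : ℝ => |t| ^ (m-1)) 0 :=
      (Real.continuousAt_rpow_const |(0:ℝ)| (m-1) (Or.inr (by linarith))).comp
        continuous_abs.continuousAt
    have hlim : Filter.Tendsto (fun t : ℝ => |t| ^ (m-1)) (nhds 0) (nhds 0) := by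
      have := hc.tendsto
      simpa [Real.zero_rpow (show m - 1 ≠ 0 by intro h; linarith)] using this
    rw [ContinuousAt, phim_zero]
    exact squeeze_zero_norm (fun t => by rw [Real.norm_eq_abs, abs_phim m hm]) hlim
  · exact (((Real.continuousAt_rpow_const |x| (m-2) (Or.inl (abs_ne_zero.2 hx))).comp
      continuous_abs.continuousAt).mul continuousAt_id)

lemma le_of_phim_le (m : ℝ) (hm : 1 < m) {c x : ℝ} (hc : 0 ≤ c) (h : -c ≤ phim m x) :
    -(c ^ (1/(m-1))) ≤ x := by
  by_contra hlt
  push_neg at hlt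
  have hcp : 0 ≤ c ^ (1/(m-1)) := Real.rpow_nonneg hc _
  have hx0 : x < 0 := lt_of_lt_of_le hlt (by linarith)
  have habs : c ^ (1/(m-1)) < |x| := by rw [abs_of_neg hx0]; linarith
  have h2 : c < |x| ^ (m-1) := by
    have := Real.rpow_lt_rpow hcp habs (show (0:ℝ) < m - 1 by linarith)
    rwa [← Real.rpow_mul hc, one_div, inv_mul_cancel₀ (show m - 1 ≠ 0 by intro h; linarith),
      Real.rpow_one] at this
  have hsign : phim m x ≤ 0 :=
    mul_nonpos_of_nonneg_of_nonpos (Real.rpow_nonneg (abs_nonneg x) _) hx0.le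
  have heq : phim m x = -(|x| ^ (m-1)) := by
    rw [← abs_phim m hm, abs_of_nonpos hsign, neg_neg]
  linarith [heq ▸ h]

/-- lower bound for the first time `r_θ` at which the solution
descends from `α` to `θα`. -/
theorem rtheta_lower_bound
    (N m : ℝ) (hm : 1 < m) (hNm : m ≤ N) (f : ℝ → ℝ) (hf : Continuous f)
    (α : ℝ) (hα : 0 < α) (J : Set ℝ) (hJ : IVPDomain J)
    (u u' : ℝ → ℝ) (hu : IsIVPSolutionOn N m f α J u u')
    (θ : ℝ) (hθ : θ ∈ Set.Ioo (0:ℝ) 1)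
    (rθ : ℝ) (hrθJ : rθ ∈ J) (hrθ0 : 0 < rθ) (hrθ : u rθ = θ * α)
    (hrange : ∀ r ∈ Set.Icc (0:ℝ) rθ, θ * α ≤ u r ∧ u r ≤ α)
    (M : ℝ) (hM : M = sSup (f '' Set.Icc (θ * α) α)) (hMpos : 0 < M) :
    ((1 - θ) * (m / (m - 1))) ^ (m - 1) * N * α ^ (m - 1) / M ≤ rθ ^ m := by
  obtain ⟨⟨hud, hu'c, w', hwd, hwc, hode⟩, hu0, hu'0⟩ := hu
  obtain ⟨hθ0, hθ1⟩ := hθ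
  have hN1 : 1 < N := lt_of_lt_of_le hm hNm
  have hN0 : (0:ℝ) < N := by linarith
  have hm1 : (0:ℝ) < m - 1 := by linarith
  have hm0 : (0:ℝ) < m := by linarith
  -- domain facts
  have hJsub : Set.Icc (0:ℝ) rθ ⊆ J := by
    rcases hJ with rfl | ⟨R, hR, rfl⟩
    · exact fun x hx => hx.1
    · exact fun x hx => ⟨hx.1, lt_of_le_of_lt hx.2 hrθJ.2⟩
  have hJopen : IsOpen (J ∩ Set.Ioi (0:ℝ)) := by
    rcases hJ with rfl | ⟨R, hR, rfl⟩
    · have : Set.Ici (0:ℝ) ∩ Set.Ioi 0 = Set.Ioi 0 := by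
        ext x; simp only [Set.mem_inter_iff, Set.mem_Ici, Set.mem_Ioi]
        exact ⟨fun h => h.2, fun h => ⟨h.le, h⟩⟩
      rw [this]; exact isOpen_Ioi
    · have : Set.Ico (0:ℝ) R ∩ Set.Ioi 0 = Set.Ioo 0 R := by
        ext x; simp only [Set.mem_inter_iff, Set.mem_Ico, Set.mem_Ioi, Set.mem_Ioo]
        exact ⟨fun h => ⟨h.2, h.1.2⟩, fun h => ⟨⟨h.1.le, h.2⟩, h.1⟩⟩
      rw [this]; exact isOpen_Ioo
  have hmemJ : ∀ x ∈ Set.Ioo (0:ℝ) rθ, x ∈ J ∩ Set.Ioi (0:ℝ) := by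
    intro x hx; exact ⟨hJsub ⟨hx.1.le, hx.2.le⟩, hx.1⟩
  have hfle : ∀ t ∈ Set.Icc (0:ℝ) rθ, f (u t) ≤ M := by
    intro t ht
    rw [hM]
    exact le_csSup (isCompact_Icc.image hf).bddAbove
      (Set.mem_image_of_mem f ⟨(hrange t ht).1, (hrange t ht).2⟩)
  -- step A: the function g
  set g : ℝ → ℝ := fun r => r ^ (N-1) * phim m (u' r) + M / N * r ^ N with hg
  have hgderiv : ∀ x ∈ Set.Ioo (0:ℝ) rθ, HasDerivAt g (x ^ (N-1) * (M - f (u x))) x := by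
    intro x hx
    have hxJ : x ∈ J ∩ Set.Ioi 0 := hmemJ x hx
    have hx0 : (0:ℝ) < x := hx.1
    have h1 : HasDerivAt (fun r : ℝ => r ^ (N-1)) ((N-1) * x ^ (N-1-1)) x :=
      Real.hasDerivAt_rpow_const (Or.inl hx0.ne')
    have h2 : HasDerivAt (fun r => phim m (u' r)) (w' x) x :=
      (hwd x hxJ).hasDerivAt (hJopen.mem_nhds hxJ)
    have h3 : HasDerivAt (fun r : ℝ => r ^ N) (N * x ^ (N-1)) x :=
      Real.hasDerivAt_rpow_const (Or.inl hx0.ne')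
    have h4 := (h1.mul h2).add (h3.const_mul (M / N))
    convert h4 using 1
    case e'_4 => rfl
    case e'_5 => rfl
    case e'_8 => rfl
    have hode' := hode x hxJ
    have hw : w' x = -((N-1)/x * phim m (u' x)) - f (u x) := by linarith
    rw [hw, show x ^ (N-1-1) = x ^ (N-1) / x by rw [Real.rpow_sub hx0, Real.rpow_one]]
    field_simp
    ring
  have hgcont : ContinuousOn g (Set.Icc 0 rθ) := by
    apply ContinuousOn.add
    · apply ContinuousOn.mul
      · exact fun x _ => (Real.continuousAt_rpow_const x (N-1) (Or.inr (by linarith))).continuousWithinAt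
      · exact (phim_continuous m hm).comp_continuousOn (hu'c.mono hJsub)
    · exact continuousOn_const.mul
        (fun x _ => (Real.continuousAt_rpow_const x N (Or.inr hN0.le)).continuousWithinAt)
  have hgmono : MonotoneOn g (Set.Icc 0 rθ) := by
    apply monotoneOn_of_deriv_nonneg (convex_Icc 0 rθ) hgcont
    · intro x hx
      rw [interior_Icc] at hx
      exact (hgderiv x hx).differentiableAt.differentiableWithinAt
    · intro x hx
      rw [interior_Icc] at hx
      rw [(hgderiv x hx).deriv]
      exact mul_nonneg (Real.rpow_nonneg hx.1.le _)
        (by linarith [hfle x ⟨hx.1.le, hx.2.le⟩])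
  have hg0 : g 0 = 0 := by
    simp [hg, hu'0, phim_zero, Real.zero_rpow (show N - 1 ≠ 0 by intro h; linarith),
      Real.zero_rpow hN0.ne']
  have hphimge : ∀ x ∈ Set.Ioo (0:ℝ) rθ, -(M/N*x) ≤ phim m (u' x) := by
    intro x hx
    have h0le : g 0 ≤ g x := hgmono ⟨le_refl 0, hrθ0.le⟩ ⟨hx.1.le, hx.2.le⟩ hx.1.le
    rw [hg0] at h0le
    have hxN : x ^ N = x ^ (N-1) * x := by
      rw [show N = (N-1)+1 by ring, Real.rpow_add_one hx.1.ne']; ring_nf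
    have hxpos : (0:ℝ) < x ^ (N-1) := Real.rpow_pos_of_pos hx.1 _
    have h2 : 0 ≤ x ^ (N-1) * (phim m (u' x) + M/N*x) := by
      have heq : g x = x ^ (N-1) * (phim m (u' x) + M/N*x) := by
        rw [hg]; simp only; rw [hxN]; ring
      linarith [heq ▸ h0le]
    nlinarith [h2, hxpos]
  -- step B: lower bound on u'
  have hu'ge : ∀ x ∈ Set.Ioo (0:ℝ) rθ, -((M/N)^(1/(m-1)) * x^(1/(m-1))) ≤ u' x := by
    intro x hx
    have hc : (0:ℝ) ≤ M/N * x := mul_nonneg (by positivity) hx.1.le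
    have h1 := le_of_phim_le m hm hc (hphimge x hx)
    rwa [Real.mul_rpow (by positivity) hx.1.le] at h1
  -- step C: the function h
  set C : ℝ := (M/N) ^ (1/(m-1)) with hC
  have hCpos : 0 < C := Real.rpow_pos_of_pos (by positivity) _
  set p : ℝ := m/(m-1) with hp
  have hppos : 0 < p := by positivity
  set F : ℝ → ℝ := fun r => u r + (m-1)/m * C * r ^ p with hF
  have hFderiv : ∀ x ∈ Set.Ioo (0:ℝ) rθ, HasDerivAt F (u' x + C * x ^ (1/(m-1))) x := by
    intro x hx
    have hxJ : x ∈ J ∩ Set.Ioi 0 := hmemJ x hx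
    have h1 : HasDerivAt u (u' x) x :=
      (hud x hxJ.1).hasDerivAt (mem_nhds_iff.2 ⟨_, Set.inter_subset_left, hJopen, hxJ⟩)
    have h2 : HasDerivAt (fun r : ℝ => r ^ p) (p * x ^ (p-1)) x :=
      Real.hasDerivAt_rpow_const (Or.inl hx.1.ne')
    have h3 := h1.add (h2.const_mul ((m-1)/m * C))
    convert h3 using 1
    case e'_4 => rfl
    case e'_5 => rfl
    case e'_8 => rfl
    rw [show p - 1 = 1/(m-1) by rw [hp]; field_simp; ring, hp]
    field_simp
  have hFcont : ContinuousOn F (Set.Icc 0 rθ) := by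
    apply ContinuousOn.add
    · exact ContinuousOn.mono (fun x hx => (hud x hx).continuousWithinAt : ContinuousOn u J) hJsub
    · exact continuousOn_const.mul
        (fun x _ => (Real.continuousAt_rpow_const x p (Or.inr hppos.le)).continuousWithinAt)
  have hFmono : MonotoneOn F (Set.Icc 0 rθ) := by
    apply monotoneOn_of_deriv_nonneg (convex_Icc 0 rθ) hFcont
    · intro x hx
      rw [interior_Icc] at hx
      exact (hFderiv x hx).differentiableAt.differentiableWithinAt
    · intro x hx
      rw [interior_Icc] at hx
      rw [(hFderiv x hx).deriv]
      linarith [hu'ge x hx]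
  have hkey : (1-θ)*α ≤ (m-1)/m * C * rθ ^ p := by
    have hle : F 0 ≤ F rθ :=
      hFmono ⟨le_refl 0, hrθ0.le⟩ ⟨hrθ0.le, le_refl rθ⟩ hrθ0.le
    have h0 : F 0 = α := by
      simp [hF, hu0, Real.zero_rpow hppos.ne']
    have hr : F rθ = θ*α + (m-1)/m * C * rθ ^ p := by rw [hF]; simp only; rw [hrθ]
    rw [h0, hr] at hle
    linarith
  -- final algebra
  have hA : (0:ℝ) ≤ (1-θ)*α := by nlinarith
  have h2 := Real.rpow_le_rpow hA hkey hm1.le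
  rw [Real.mul_rpow (by linarith : (0:ℝ) ≤ 1-θ) hα.le] at h2
  rw [Real.mul_rpow (by positivity) (Real.rpow_nonneg hrθ0.le p),
    Real.mul_rpow (by positivity) hCpos.le] at h2
  rw [hC, ← Real.rpow_mul (by positivity : (0:ℝ) ≤ M/N), one_div,
    inv_mul_cancel₀ hm1.ne', Real.rpow_one] at h2
  rw [← Real.rpow_mul hrθ0.le, show p * (m-1) = m by rw [hp]; field_simp] at h2
  -- h2 : (1-θ)^(m-1) * α^(m-1) ≤ ((m-1)/m)^(m-1) * (M/N) * rθ^m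
  set q : ℝ := ((m-1)/m) ^ (m-1) with hq
  have hqpos : 0 < q := Real.rpow_pos_of_pos (by positivity) _
  have hrw : ((1-θ)*p)^(m-1) = (1-θ)^(m-1) * q⁻¹ := by
    rw [hp]
    rw [Real.mul_rpow (by linarith) (by positivity)]
    congr 1
    rw [show m/(m-1) = ((m-1)/m)⁻¹ from (inv_div (m-1) m).symm,
      Real.inv_rpow (by positivity)]
  rw [hrw]
  have hqM : (0:ℝ) < N / (q * M) := by positivity
  calc (1-θ)^(m-1) * q⁻¹ * N * α^(m-1) / M
      = ((1-θ)^(m-1) * α^(m-1)) * (N/(q*M)) := by field_simp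
    _ ≤ (q * (M/N) * rθ^m) * (N/(q*M)) := mul_le_mul_of_nonneg_right h2 hqM.le
    _ = rθ^m := by field_simp
end

section
/- Let N ≥ m > 1 and let f : ℝ → ℝ be continuous. Let γ⁻ ∈ ℝ, β̄ > 0 with −β̄ > γ⁻, and L₀ > 0 be such that −f(s) ≤ L₀·(s − γ⁻)^(m−1) for all s ∈ (γ⁻, −β̄]. Let u be a solution of the radial equation on [T, s*] with 0 < T < s*, u'(T) = 0, u'(r) ≥ 0 for all r ∈ [T, s*], and u(r) ∈ (γ⁻, −β̄] for all r ∈ [T, s*]. Then, with C = (L₀/N)^(1/(m−1)), for every r ∈ [T, s*] one has 0 ≤ u'(r) ≤ C·(s*)^(1/(m−1))·(u(T) − γ⁻)·exp( C·(s*)^(m/(m−1)) ). -/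
open Set Filter MeasureTheory

lemma phim_of_nonneg {m x : ℝ} (hm : 1 < m) (hx : 0 ≤ x) : phim m x = x ^ (m - 1) := by
  rcases hx.lt_or_eq with h | h
  · unfold phim
    rw [abs_of_pos h, ← Real.rpow_add_one h.ne']
    congr 1; ring
  · rw [← h]
    unfold phim
    rw [mul_zero, Real.zero_rpow (by intro hc; linarith)]

/-- Gronwall-type a priori bound for `u'` while `u` stays in
`(γ⁻, -β̄]` under the growth bound (f₄)(b). -/
theorem gronwall_derivative_bound
    (N m : ℝ) (hm : 1 < m) (hNm : m ≤ N) (f : ℝ → ℝ) (hf : Continuous f)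
    (γm βb L₀ : ℝ) (hβb : 0 < βb) (hγ : γm < -βb) (hL₀ : 0 < L₀)
    (hfb : ∀ s : ℝ, γm < s → s ≤ -βb → -f s ≤ L₀ * (s - γm) ^ (m - 1))
    (T ss : ℝ) (hT : 0 < T) (hTs : T < ss)
    (u u' : ℝ → ℝ) (hu : IsSolutionOn N m f (Set.Icc T ss) u u')
    (hT0 : u' T = 0) (hpos : ∀ r ∈ Set.Icc T ss, 0 ≤ u' r)
    (hrange : ∀ r ∈ Set.Icc T ss, γm < u r ∧ u r ≤ -βb) :
    ∀ r ∈ Set.Icc T ss, 0 ≤ u' r ∧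
      u' r ≤ (L₀ / N) ^ (1 / (m - 1)) * ss ^ (1 / (m - 1)) * (u T - γm) *
        Real.exp ((L₀ / N) ^ (1 / (m - 1)) * ss ^ (m / (m - 1))) := by
  obtain ⟨hud, hu'c, w', hwd, hw'c, heq⟩ := hu
  have hm1 : (0:ℝ) < m - 1 := by linarith
  have hN : (0:ℝ) < N := by linarith
  have hss : (0:ℝ) < ss := lt_trans hT hTs
  have hIcc : Set.Icc T ss ∩ Set.Ioi (0:ℝ) = Set.Icc T ss :=
    Set.inter_eq_left.mpr (fun x hx => lt_of_lt_of_le hT hx.1)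
  rw [hIcc] at hwd heq
  have hx0 : ∀ x ∈ Set.Icc T ss, (0:ℝ) < x := fun x hx => lt_of_lt_of_le hT hx.1
  have hvpos : ∀ x ∈ Set.Icc T ss, (0:ℝ) < u x - γm := fun x hx =>
    sub_pos.mpr (hrange x hx).1
  set C : ℝ := (L₀ / N) ^ (1 / (m - 1)) with hC
  set K : ℝ := C * ss ^ (1 / (m - 1)) with hK
  have hCpos : 0 < C := Real.rpow_pos_of_pos (div_pos hL₀ hN) _
  have hKpos : 0 < K := mul_pos hCpos (Real.rpow_pos_of_pos hss _)
  -- the comparison function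
  set F : ℝ → ℝ := fun r =>
    (u r - γm) ^ (m - 1) * (L₀ / N) * r ^ N - r ^ (N - 1) * phim m (u' r) with hF
  set F' : ℝ → ℝ := fun r =>
    (u' r * (m - 1) * (u r - γm) ^ (m - 1 - 1) * (L₀ / N) * r ^ N
      + (u r - γm) ^ (m - 1) * (L₀ / N) * (N * r ^ (N - 1)))
    - ((N - 1) * r ^ (N - 1 - 1) * phim m (u' r) + r ^ (N - 1) * w' r) with hF'
  have hFderiv : ∀ x ∈ Set.Icc T ss, HasDerivWithinAt F (F' x) (Set.Icc T ss) x := by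
    intro x hx
    have h1 : HasDerivWithinAt (fun t => (u t - γm) ^ (m - 1))
        (u' x * (m - 1) * (u x - γm) ^ (m - 1 - 1)) (Set.Icc T ss) x :=
      ((hud x hx).sub_const γm).rpow_const (Or.inl (ne_of_gt (hvpos x hx)))
    have h2 : HasDerivWithinAt (fun t : ℝ => t ^ N) (N * x ^ (N - 1)) (Set.Icc T ss) x :=
      (Real.hasDerivAt_rpow_const (Or.inl (hx0 x hx).ne')).hasDerivWithinAt
    have h3 : HasDerivWithinAt (fun t : ℝ => t ^ (N - 1))
        ((N - 1) * x ^ (N - 1 - 1)) (Set.Icc T ss) x :=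
      (Real.hasDerivAt_rpow_const (Or.inl (hx0 x hx).ne')).hasDerivWithinAt
    have hG := ((h1.mul_const (L₀ / N)).mul h2)
    have hW := h3.mul (hwd x hx)
    exact hG.sub hW
  have hF'nonneg : ∀ x ∈ Set.Icc T ss, 0 ≤ F' x := by
    intro x hx
    have hxpos := hx0 x hx
    have hv := hvpos x hx
    have hw'x : w' x = -(((N - 1) / x) * phim m (u' x)) - f (u x) := by
      have := heq x hx; linarith
    have e1 : x ^ (N - 1 - 1) = x ^ (N - 1) / x := by
      rw [Real.rpow_sub hxpos, Real.rpow_one]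
    have e2 : x ^ (N - 1) * x = x ^ N := by
      rw [← Real.rpow_add_one hxpos.ne']; congr 1; ring
    have hEq : F' x = (L₀ / N) * (u' x * (m - 1) * (u x - γm) ^ (m - 1 - 1)) * x ^ N
        + x ^ (N - 1) * (L₀ * (u x - γm) ^ (m - 1) + f (u x)) := by
      simp only [hF']
      rw [hw'x, e1, ← e2]
      field_simp
      ring
    have t1 : 0 ≤ (L₀ / N) * (u' x * (m - 1) * (u x - γm) ^ (m - 1 - 1)) * x ^ N := by
      apply mul_nonneg
      apply mul_nonneg (le_of_lt (div_pos hL₀ hN))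
      apply mul_nonneg (mul_nonneg (hpos x hx) (le_of_lt hm1))
      · exact Real.rpow_nonneg hv.le _
      · exact Real.rpow_nonneg hxpos.le _
    have t2 : 0 ≤ x ^ (N - 1) * (L₀ * (u x - γm) ^ (m - 1) + f (u x)) := by
      apply mul_nonneg (Real.rpow_nonneg hxpos.le _)
      have := hfb (u x) (hrange x hx).1 (hrange x hx).2
      linarith
    linarith [hEq ▸ (add_nonneg t1 t2)]
  have hFcont : ContinuousOn F (Set.Icc T ss) := fun x hx =>
    (hFderiv x hx).continuousWithinAt
  have hFmono : MonotoneOn F (Set.Icc T ss) := by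
    apply monotoneOn_of_hasDerivWithinAt_nonneg (convex_Icc T ss) hFcont
    · intro x hx
      exact (hFderiv x (interior_subset hx)).mono interior_subset
    · intro x hx
      exact hF'nonneg x (interior_subset hx)
  have hFT : 0 ≤ F T := by
    simp only [hF, hT0]
    have : phim m 0 = 0 := by unfold phim; rw [mul_zero]
    rw [this, mul_zero, sub_zero]
    apply mul_nonneg (mul_nonneg
      (Real.rpow_nonneg (hvpos T ⟨le_refl T, hTs.le⟩).le _)
      (le_of_lt (div_pos hL₀ hN))) (Real.rpow_nonneg hT.le _)
  -- pointwise bound u' r ≤ K * (u r - γm)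
  have hKbound : ∀ r ∈ Set.Icc T ss, u' r ≤ K * (u r - γm) := by
    intro r hr
    have hrpos := hx0 r hr
    have hv := hvpos r hr
    have hFr : 0 ≤ F r := le_trans hFT (hFmono ⟨le_refl T, hTs.le⟩ hr hr.1)
    have e2 : r ^ (N - 1) * r = r ^ N := by
      rw [← Real.rpow_add_one hrpos.ne']; congr 1; ring
    have hphir : phim m (u' r) = (u' r) ^ (m - 1) := phim_of_nonneg hm (hpos r hr)
    have step1 : (u' r) ^ (m - 1) ≤ (L₀ / N) * (u r - γm) ^ (m - 1) * r := by
      have h' : r ^ (N - 1) * (u' r) ^ (m - 1)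
          ≤ r ^ (N - 1) * ((L₀ / N) * (u r - γm) ^ (m - 1) * r) := by
        simp only [hF] at hFr
        rw [hphir, ← e2] at hFr
        nlinarith [hFr]
      exact le_of_mul_le_mul_left (by linarith [h']) (Real.rpow_pos_of_pos hrpos (N - 1))
    have inv1 : ∀ y : ℝ, 0 ≤ y → (y ^ (m - 1)) ^ (1 / (m - 1)) = y := by
      intro y hy
      rw [← Real.rpow_mul hy, mul_one_div, div_self hm1.ne', Real.rpow_one]
    have step2 : u' r ≤ (L₀ / N) ^ (1 / (m - 1)) * (u r - γm) * r ^ (1 / (m - 1)) := by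
      have := Real.rpow_le_rpow (Real.rpow_nonneg (hpos r hr) _) step1
        (le_of_lt (by positivity : (0:ℝ) < 1 / (m - 1)))
      rw [inv1 _ (hpos r hr)] at this
      calc u' r ≤ ((L₀ / N) * (u r - γm) ^ (m - 1) * r) ^ (1 / (m - 1)) := this
        _ = (L₀ / N) ^ (1 / (m - 1)) * (u r - γm) * r ^ (1 / (m - 1)) := by
            rw [Real.mul_rpow (by positivity) hrpos.le,
              Real.mul_rpow (by positivity) (Real.rpow_nonneg hv.le _),
              inv1 _ hv.le]
    calc u' r ≤ (L₀ / N) ^ (1 / (m - 1)) * (u r - γm) * r ^ (1 / (m - 1)) := step2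
      _ ≤ (L₀ / N) ^ (1 / (m - 1)) * (u r - γm) * ss ^ (1 / (m - 1)) := by
          apply mul_le_mul_of_nonneg_left
          · exact Real.rpow_le_rpow hrpos.le hr.2 (by positivity)
          · exact mul_nonneg hCpos.le hv.le
      _ = K * (u r - γm) := by rw [hK]; ring
  -- Gronwall
  set δ : ℝ := u T - γm with hδ
  have hδpos : 0 < δ := hvpos T ⟨le_refl T, hTs.le⟩
  have hgron : ∀ x ∈ Set.Icc T ss, ‖u x - γm‖ ≤ gronwallBound δ K 0 (x - T) := by
    apply norm_le_gronwallBound_of_norm_deriv_right_le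
    · exact fun x hx => ((hud x hx).continuousWithinAt).sub continuousWithinAt_const
    · intro x hx
      exact ((hud x (Set.Ico_subset_Icc_self hx)).sub_const γm).mono_of_mem_nhdsWithin
        (Icc_mem_nhdsGE_of_mem hx)
    · rw [Real.norm_eq_abs, abs_of_pos hδpos]
    · intro x hx
      have hx' := Set.Ico_subset_Icc_self hx
      rw [Real.norm_eq_abs, Real.norm_eq_abs, abs_of_nonneg (hpos x hx'),
        abs_of_pos (hvpos x hx'), add_zero]
      exact hKbound x hx'
  -- conclusion
  intro r hr
  refine ⟨hpos r hr, ?_⟩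
  have hv := hvpos r hr
  have hgr := hgron r hr
  rw [Real.norm_eq_abs, abs_of_pos hv, gronwallBound_ε0] at hgr
  have hexp : Real.exp (K * (r - T)) ≤ Real.exp (C * ss ^ (m / (m - 1))) := by
    apply Real.exp_le_exp.mpr
    have e3 : ss ^ (m / (m - 1)) = ss ^ (1 / (m - 1)) * ss := by
      rw [show m / (m - 1) = 1 / (m - 1) + 1 by field_simp; ring,
        Real.rpow_add hss, Real.rpow_one]
    rw [e3, ← mul_assoc]
    have : r - T ≤ ss := by
      have := hr.2; linarith
    calc K * (r - T) ≤ K * ss := mul_le_mul_of_nonneg_left this hKpos.le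
      _ = C * ss ^ (1 / (m - 1)) * ss := by rw [hK]
  calc u' r ≤ K * (u r - γm) := hKbound r hr
    _ ≤ K * (δ * Real.exp (K * (r - T))) :=
        mul_le_mul_of_nonneg_left hgr hKpos.le
    _ ≤ K * (δ * Real.exp (C * ss ^ (m / (m - 1)))) := by
        apply mul_le_mul_of_nonneg_left _ hKpos.le
        exact mul_le_mul_of_nonneg_left hexp hδpos.le
    _ = C * ss ^ (1 / (m - 1)) * (u T - γm) * Real.exp (C * ss ^ (m / (m - 1))) := by
        rw [hK, hδ]; ring
end
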